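/- For every k ≥ 1 and all h₁, h₂ ∈ H, one has [h₁h₂, x, (2^k−1)…, x] ≡ [h₁, x, (2^k−1)…, x] · [h₂, x, (2^k−1)…, x] modulo L_k, i.e. ([h₁,x,(2^k−1)…,x]·[h₂,x,(2^k−1)…,x])^{−1} · [h₁h₂,x,(2^k−1)…,x] ∈ L_k. (Lemma 3.3(ii) of the paper.) -/

import Mathlib

namespace Paper

variable {G : Type*} [Group G]

/-- The paper's commutator `[a,b] = a⁻¹ b⁻¹ a b`. -/
def pc {G : Type*} [Group G] (a b : G) : G := a⁻¹ * b⁻¹ * a * b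

/-- The left-normed iterated commutator `[a, x, (r)…, x]`. -/
def itc {G : Type*} [Group G] (x a : G) : ℕ → G
  | 0 => a
  | r + 1 => pc (itc x a r) x

/-- `c_i`, where `c_1 = y` and `c_{i+1} = [c_i, x]`; equivalently `c_i = [y, x, (i-1)…, x]`. -/
def cc (x y : G) (i : ℕ) : G := itc x y (i - 1)

/-- `z_{m,n} = [c_m, c_n]`. -/
def zz (x y : G) (m n : ℕ) : G := pc (cc x y m) (cc x y n)

/-- `H = ⟨c_i : i ≥ 1⟩`. -/
def Hsub (x y : G) : Subgroup G :=
  Subgroup.closure {g | ∃ i, 1 ≤ i ∧ g = cc x y i}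

/-- `Z = ⟨c_l², z_{m,n} : l, m, n ≥ 1⟩`. -/
def Zsub (x y : G) : Subgroup G :=
  Subgroup.closure ({g | ∃ l, 1 ≤ l ∧ g = cc x y l ^ 2} ∪
    {g | ∃ m n, 1 ≤ m ∧ 1 ≤ n ∧ g = zz x y m n})

/-- `w_{i,j,k} = ∏_{t=1}^{2^k−1} [z_{i+t,j+t−1}, x, (2^k−1−t)…, x]`,
factors in order of increasing `t` (reindexed by `t ↦ t+1`). -/
def ww (x y : G) (i j k : ℕ) : G :=
  ((List.range (2 ^ k - 1)).map
    (fun t => itc x (zz x y (i + t + 1) (j + t)) (2 ^ k - 2 - t))).prod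

/-- `L_k`, the normal closure of `{w_{i,j,k} : i,j ≥ 1} ∪ {z_{m,n} : m ≥ 2^k, n ≥ 1}`. -/
def Lsub (x y : G) (k : ℕ) : Subgroup G :=
  Subgroup.normalClosure ({g | ∃ i j, 1 ≤ i ∧ 1 ≤ j ∧ g = ww x y i j k} ∪
    {g | ∃ m n, 2 ^ k ≤ m ∧ 1 ≤ n ∧ g = zz x y m n})

/-- `Q_k = ⟨c_l² : l ≥ 2^{k−1}⟩`. -/
def Qsub (x y : G) (k : ℕ) : Subgroup G :=
  Subgroup.closure {g | ∃ l, 2 ^ (k - 1) ≤ l ∧ g = cc x y l ^ 2}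

/-- `d_k(h) = [h,x,(2^k−1)…,x]⁻¹ · x^{−2^k} · (xh)^{2^k}`. -/
def dd (x y : G) (k : ℕ) (h : G) : G :=
  (itc x h (2 ^ k - 1))⁻¹ * (x ^ 2 ^ k)⁻¹ * (x * h) ^ 2 ^ k

/-- `Γ^{2^k} = ⟨g^{2^k} : g ∈ Γ⟩`. -/
def pow2Sub (G : Type*) [Group G] (k : ℕ) : Subgroup G :=
  Subgroup.closure {g | ∃ a : G, g = a ^ 2 ^ k}

/-- `ζ(h₁,h₂) = ∏_{ℓ=0}^{2^k−2} [h₁^x, x, (ℓ)…, x, h₂, x, (2^k−2−ℓ)…, x]`,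
factors in order of increasing `ℓ`. -/
def zeta (x : G) (k : ℕ) (h₁ h₂ : G) : G :=
  ((List.range (2 ^ k - 1)).map
    (fun l => itc x (pc (itc x (x⁻¹ * h₁ * x) l) h₂) (2 ^ k - 2 - l))).prod

/-! ### Raw identities -/

lemma pc_one_left (b : G) : pc (1 : G) b = 1 := by simp [pc]
lemma pc_one_right (a : G) : pc a (1 : G) = 1 := by simp [pc]

lemma itc_zero (x a : G) : itc x a 0 = a := rfl
lemma itc_succ (x a : G) (r : ℕ) : itc x a (r + 1) = pc (itc x a r) x := rfl

lemma itc_one (x : G) (r : ℕ) : itc x (1 : G) r = 1 := by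
  induction r with
  | zero => rfl
  | succ n ih => rw [itc_succ, ih, pc_one_left]

lemma itc_itc (x a : G) (m n : ℕ) : itc x (itc x a m) n = itc x a (m + n) := by
  induction n with
  | zero => rfl
  | succ n ih => rw [itc_succ, ih]; rfl

lemma itc_cc (x y : G) (i m : ℕ) (hi : 1 ≤ i) :
    itc x (cc x y i) m = cc x y (i + m) := by
  simp only [cc, itc_itc]
  congr 1
  omega

lemma pc_cc (x y : G) (l : ℕ) (hl : 1 ≤ l) : pc (cc x y l) x = cc x y (l + 1) := by
  have h := itc_cc x y l 1 hl
  rw [show itc x (cc x y l) 1 = pc (cc x y l) x from rfl] at h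
  exact h

/-! ### Membership basics -/

lemma cc_mem (x y : G) (i : ℕ) : cc x y i ∈ Hsub x y := by
  rcases Nat.eq_zero_or_pos i with h | h
  · subst h
    exact Subgroup.subset_closure ⟨1, le_refl 1, rfl⟩
  · exact Subgroup.subset_closure ⟨i, h, rfl⟩

lemma pc_mem {S : Subgroup G} {a b : G} (ha : a ∈ S) (hb : b ∈ S) : pc a b ∈ S := by
  exact mul_mem (mul_mem (mul_mem (inv_mem ha) (inv_mem hb)) ha) hb

lemma Z_le_H (x y : G) : Zsub x y ≤ Hsub x y := by
  refine (Subgroup.closure_le _).2 ?_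
  rintro g (⟨l, hl, rfl⟩ | ⟨m, n, hm, hn, rfl⟩)
  · exact pow_mem (cc_mem x y l) 2
  · exact pc_mem (cc_mem x y m) (cc_mem x y n)

/-! ### Centrality helpers -/

section Central

variable (x y : G)

lemma conjZ (hca : ∀ z ∈ Zsub x y, ∀ h ∈ Hsub x y, z * h = h * z)
    {z h : G} (hz : z ∈ Zsub x y) (hh : h ∈ Hsub x y) : h⁻¹ * z * h = z := by
  have h1 := hca z hz h hh
  calc h⁻¹ * z * h = h⁻¹ * (z * h) := by group
    _ = h⁻¹ * (h * z) := by rw [h1]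
    _ = z := by group

lemma conjZ' (hca : ∀ z ∈ Zsub x y, ∀ h ∈ Hsub x y, z * h = h * z)
    {z h : G} (hz : z ∈ Zsub x y) (hh : h ∈ Hsub x y) : h * z * h⁻¹ = z := by
  have := conjZ x y hca hz (inv_mem hh)
  simpa using this

lemma conjH (hca : ∀ z ∈ Zsub x y, ∀ h ∈ Hsub x y, z * h = h * z)
    {z h : G} (hz : z ∈ Zsub x y) (hh : h ∈ Hsub x y) : z⁻¹ * h * z = h := by
  have h1 := hca z hz h hh
  calc z⁻¹ * h * z = z⁻¹ * (h * z) := by group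
    _ = z⁻¹ * (z * h) := by rw [← h1]
    _ = h := by group

lemma zcomm (hca : ∀ z ∈ Zsub x y, ∀ h ∈ Hsub x y, z * h = h * z)
    {z w : G} (hz : z ∈ Zsub x y) (hw : w ∈ Zsub x y) : z * w = w * z :=
  hca z hz w (Z_le_H x y hw)

lemma pcZH (hca : ∀ z ∈ Zsub x y, ∀ h ∈ Hsub x y, z * h = h * z)
    {z h : G} (hz : z ∈ Zsub x y) (hh : h ∈ Hsub x y) : pc z h = 1 := by
  have h1 : pc z h = z⁻¹ * (h⁻¹ * z * h) := by simp only [pc]; group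
  rw [h1, conjZ x y hca hz hh, inv_mul_cancel]

lemma pcHZ (hca : ∀ z ∈ Zsub x y, ∀ h ∈ Hsub x y, z * h = h * z)
    {z h : G} (hz : z ∈ Zsub x y) (hh : h ∈ Hsub x y) : pc h z = 1 := by
  have h1 : pc h z = (h⁻¹ * z⁻¹ * h) * z := by rfl
  rw [h1, conjZ x y hca (inv_mem hz) hh, inv_mul_cancel]

lemma z_invol (hz2 : ∀ z ∈ Zsub x y, z ^ 2 = 1)
    {w : G} (hw : w ∈ Zsub x y) : w⁻¹ = w := by
  have h := hz2 w hw
  rw [pow_two] at h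
  exact inv_eq_of_mul_eq_one_right h

end Central

/-! ### Commutators of H-elements lie in Z -/

lemma pc_mem_Z (x y : G) (hca : ∀ z ∈ Zsub x y, ∀ h ∈ Hsub x y, z * h = h * z) :
    ∀ a ∈ Hsub x y, ∀ b ∈ Hsub x y, pc a b ∈ Zsub x y := by
  intro a ha
  refine Subgroup.closure_induction
    (p := fun g _ => ∀ b ∈ Hsub x y, pc g b ∈ Zsub x y) ?_ ?_ ?_ ?_ ha
  · rintro g ⟨i, hi, rfl⟩ b hb
    refine Subgroup.closure_induction
      (p := fun b _ => pc (cc x y i) b ∈ Zsub x y) ?_ ?_ ?_ ?_ hb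
    · rintro c ⟨j, hj, rfl⟩
      exact Subgroup.subset_closure (Or.inr ⟨i, j, hi, hj, rfl⟩)
    · show pc (cc x y i) 1 ∈ Zsub x y
      rw [pc_one_right]; exact one_mem _
    · intro b c hbH hcH hzb hzc
      have h1 : pc (cc x y i) (b * c) = pc (cc x y i) c * (c⁻¹ * pc (cc x y i) b * c) := by
        simp only [pc]; group
      rw [h1, conjZ x y hca hzb hcH]
      exact mul_mem hzc hzb
    · intro b hbH hzb
      have h1 : pc (cc x y i) b⁻¹ = b * (pc (cc x y i) b)⁻¹ * b⁻¹ := by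
        simp only [pc]; group
      rw [h1, conjZ' x y hca (inv_mem hzb) hbH]
      exact inv_mem hzb
  · intro b _
    show pc 1 b ∈ Zsub x y
    rw [pc_one_left]; exact one_mem _
  · intro a c haH hcH hza hzc b hb
    have h1 : pc (a * c) b = (c⁻¹ * pc a b * c) * pc c b := by
      simp only [pc]; group
    rw [h1, conjZ x y hca (hza b hb) hcH]
    exact mul_mem (hza b hb) (hzc b hb)
  · intro a haH hza b hb
    have h1 : pc a⁻¹ b = a * (pc a b)⁻¹ * a⁻¹ := by
      simp only [pc]; group
    rw [h1, conjZ' x y hca (inv_mem (hza b hb)) haH]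
    exact inv_mem (hza b hb)

/-! ### Bilinearity of pc on H -/

section Bilin

variable (x y : G) (hca : ∀ z ∈ Zsub x y, ∀ h ∈ Hsub x y, z * h = h * z)

include hca

lemma pc_mul_left_H {a b c : G} (ha : a ∈ Hsub x y) (hb : b ∈ Hsub x y) (hc : c ∈ Hsub x y) :
    pc (a * b) c = pc a c * pc b c := by
  have h1 : pc (a * b) c = (b⁻¹ * pc a c * b) * pc b c := by simp only [pc]; group
  rw [h1, conjZ x y hca (pc_mem_Z x y hca a ha c hc) hb]

lemma pc_mul_right_H {a b c : G} (ha : a ∈ Hsub x y) (hb : b ∈ Hsub x y) (hc : c ∈ Hsub x y) :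
    pc a (b * c) = pc a b * pc a c := by
  have h1 : pc a (b * c) = pc a c * (c⁻¹ * pc a b * c) := by simp only [pc]; group
  rw [h1, conjZ x y hca (pc_mem_Z x y hca a ha b hb) hc]
  exact zcomm x y hca (pc_mem_Z x y hca a ha c hc) (pc_mem_Z x y hca a ha b hb)

lemma pc_inv_left_H {a c : G} (ha : a ∈ Hsub x y) (hc : c ∈ Hsub x y) :
    pc a⁻¹ c = (pc a c)⁻¹ := by
  have h1 : pc a⁻¹ c = a * (pc a c)⁻¹ * a⁻¹ := by simp only [pc]; group
  rw [h1, conjZ' x y hca (inv_mem (pc_mem_Z x y hca a ha c hc)) ha]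

lemma pc_inv_right_H {a c : G} (ha : a ∈ Hsub x y) (hc : c ∈ Hsub x y) :
    pc a c⁻¹ = (pc a c)⁻¹ := by
  have h1 : pc a c⁻¹ = c * (pc a c)⁻¹ * c⁻¹ := by simp only [pc]; group
  rw [h1, conjZ' x y hca (inv_mem (pc_mem_Z x y hca a ha c hc)) hc]

lemma pc_zabsorb_left {a z c : G} (ha : a ∈ Hsub x y) (hz : z ∈ Zsub x y)
    (hc : c ∈ Hsub x y) : pc (a * z) c = pc a c := by
  have h1 : pc (a * z) c = (z⁻¹ * pc a c * z) * pc z c := by simp only [pc]; group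
  rw [h1, conjZ x y hca (pc_mem_Z x y hca a ha c hc) (Z_le_H x y hz),
    pcZH x y hca hz hc, mul_one]

lemma pc_zabsorb_right {a b z : G} (ha : a ∈ Hsub x y) (hb : b ∈ Hsub x y)
    (hz : z ∈ Zsub x y) : pc a (b * z) = pc a b := by
  have h1 : pc a (b * z) = pc a z * (z⁻¹ * pc a b * z) := by simp only [pc]; group
  rw [h1, conjZ x y hca (pc_mem_Z x y hca a ha b hb) (Z_le_H x y hz),
    pcHZ x y hca hz ha, one_mul]

end Bilin

/-! ### x-invariance of H and Z -/

section Xinv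

variable (x y : G)

lemma conj_x_mem_H : ∀ h ∈ Hsub x y, x⁻¹ * h * x ∈ Hsub x y := by
  intro h hh
  refine Subgroup.closure_induction
    (p := fun g _ => x⁻¹ * g * x ∈ Hsub x y) ?_ ?_ ?_ ?_ hh
  · rintro g ⟨i, hi, rfl⟩
    have h2 : x⁻¹ * cc x y i * x = cc x y i * cc x y (i + 1) := by
      rw [← pc_cc x y i hi]
      simp only [pc]; group
    rw [h2]
    exact mul_mem (cc_mem x y i) (cc_mem x y (i + 1))
  · show x⁻¹ * 1 * x ∈ Hsub x y
    simpa using one_mem (Hsub x y)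
  · intro a b _ _ ha hb
    have h2 : x⁻¹ * (a * b) * x = (x⁻¹ * a * x) * (x⁻¹ * b * x) := by group
    rw [h2]; exact mul_mem ha hb
  · intro a _ ha
    have h2 : x⁻¹ * a⁻¹ * x = (x⁻¹ * a * x)⁻¹ := by group
    rw [h2]; exact inv_mem ha

lemma pc_x_mem_H {h : G} (hh : h ∈ Hsub x y) : pc h x ∈ Hsub x y := by
  have h1 : pc h x = h⁻¹ * (x⁻¹ * h * x) := by simp only [pc]; group
  rw [h1]; exact mul_mem (inv_mem hh) (conj_x_mem_H x y h hh)

lemma itc_mem_H {h : G} (hh : h ∈ Hsub x y) (l : ℕ) : itc x h l ∈ Hsub x y := by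
  induction l with
  | zero => exact hh
  | succ n ih => exact pc_x_mem_H x y ih

variable (hca : ∀ z ∈ Zsub x y, ∀ h ∈ Hsub x y, z * h = h * z)

include hca

lemma conj_x_mem_Z : ∀ z ∈ Zsub x y, x⁻¹ * z * x ∈ Zsub x y := by
  intro z hz
  have hconj : ∀ l : ℕ, 1 ≤ l → x⁻¹ * cc x y l * x = cc x y l * cc x y (l + 1) := by
    intro l hl
    rw [← pc_cc x y l hl]; simp only [pc]; group
  refine Subgroup.closure_induction
    (p := fun g _ => x⁻¹ * g * x ∈ Zsub x y) ?_ ?_ ?_ ?_ hz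
  · rintro g (⟨l, hl, rfl⟩ | ⟨m, n, hm, hn, rfl⟩)
    · have hzmem : zz x y (l + 1) l ∈ Zsub x y :=
        Subgroup.subset_closure (Or.inr ⟨l + 1, l, by omega, hl, rfl⟩)
      have e1 : x⁻¹ * cc x y l ^ 2 * x = (x⁻¹ * cc x y l * x) * (x⁻¹ * cc x y l * x) := by
        rw [pow_two]; group
      rw [e1, hconj l hl]
      have e2 : (cc x y l * cc x y (l + 1)) * (cc x y l * cc x y (l + 1))
          = cc x y l ^ 2 * (cc x y (l + 1) * (zz x y (l + 1) l * cc x y (l + 1))) := by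
        simp only [zz, pc, pow_two]; group
      rw [e2, hca (zz x y (l + 1) l) hzmem (cc x y (l + 1)) (cc_mem x y (l + 1))]
      have e3 : cc x y l ^ 2 * (cc x y (l + 1) * (cc x y (l + 1) * zz x y (l + 1) l))
          = cc x y l ^ 2 * (cc x y (l + 1) ^ 2 * zz x y (l + 1) l) := by
        simp only [pow_two]; group
      rw [e3]
      exact mul_mem (Subgroup.subset_closure (Or.inl ⟨l, hl, rfl⟩))
        (mul_mem (Subgroup.subset_closure (Or.inl ⟨l + 1, by omega, rfl⟩)) hzmem)
    · have e : x⁻¹ * zz x y m n * x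
          = pc (x⁻¹ * cc x y m * x) (x⁻¹ * cc x y n * x) := by
        simp only [zz, pc]; group
      rw [e, hconj m hm, hconj n hn,
        pc_mul_left_H x y hca (cc_mem x y m) (cc_mem x y (m + 1))
          (mul_mem (cc_mem x y n) (cc_mem x y (n + 1))),
        pc_mul_right_H x y hca (cc_mem x y m) (cc_mem x y n) (cc_mem x y (n + 1)),
        pc_mul_right_H x y hca (cc_mem x y (m + 1)) (cc_mem x y n) (cc_mem x y (n + 1))]
      exact mul_mem
        (mul_mem (Subgroup.subset_closure (Or.inr ⟨m, n, hm, hn, rfl⟩))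
          (Subgroup.subset_closure (Or.inr ⟨m, n + 1, hm, by omega, rfl⟩)))
        (mul_mem (Subgroup.subset_closure (Or.inr ⟨m + 1, n, by omega, hn, rfl⟩))
          (Subgroup.subset_closure (Or.inr ⟨m + 1, n + 1, by omega, by omega, rfl⟩)))
  · show x⁻¹ * 1 * x ∈ Zsub x y
    simpa using one_mem (Zsub x y)
  · intro a b _ _ ha hb
    have h2 : x⁻¹ * (a * b) * x = (x⁻¹ * a * x) * (x⁻¹ * b * x) := by group
    rw [h2]; exact mul_mem ha hb
  · intro a _ ha
    have h2 : x⁻¹ * a⁻¹ * x = (x⁻¹ * a * x)⁻¹ := by group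
    rw [h2]; exact inv_mem ha

end Xinv

section Zx

variable (x y : G) (hca : ∀ z ∈ Zsub x y, ∀ h ∈ Hsub x y, z * h = h * z)

include hca

lemma pc_x_mem_Z {z : G} (hz : z ∈ Zsub x y) : pc z x ∈ Zsub x y := by
  have h1 : pc z x = z⁻¹ * (x⁻¹ * z * x) := by simp only [pc]; group
  rw [h1]
  exact mul_mem (inv_mem hz) (conj_x_mem_Z x y hca z hz)

lemma itc_mem_Z {z : G} (hz : z ∈ Zsub x y) (l : ℕ) : itc x z l ∈ Zsub x y := by
  induction l with
  | zero => exact hz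
  | succ n ih => exact pc_x_mem_Z x y hca ih

lemma pc_x_z_mul {z w : G} (hz : z ∈ Zsub x y) (hw : w ∈ Zsub x y) :
    pc (z * w) x = pc z x * pc w x := by
  have h1 : pc (z * w) x = (w⁻¹ * pc z x * w) * pc w x := by simp only [pc]; group
  rw [h1, conjZ x y hca (pc_x_mem_Z x y hca hz) (Z_le_H x y hw)]

lemma itc_z_mul {z w : G} (hz : z ∈ Zsub x y) (hw : w ∈ Zsub x y) (l : ℕ) :
    itc x (z * w) l = itc x z l * itc x w l := by
  induction l with
  | zero => rfl
  | succ n ih =>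
    rw [itc_succ, ih, pc_x_z_mul x y hca (itc_mem_Z x y hca hz n) (itc_mem_Z x y hca hw n)]
    rfl

lemma itc_z_inv {z : G} (hz : z ∈ Zsub x y) (l : ℕ) :
    itc x z⁻¹ l = (itc x z l)⁻¹ := by
  have h1 : itc x z l * itc x z⁻¹ l = 1 := by
    rw [← itc_z_mul x y hca hz (inv_mem hz), mul_inv_cancel, itc_one]
  exact (inv_eq_of_mul_eq_one_right h1).symm

end Zx

/-! ### List helpers -/

lemma list_prod_map_mem {S : Subgroup G} (n : ℕ) (f : ℕ → G) (hf : ∀ l, f l ∈ S) :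
    ((List.range n).map f).prod ∈ S := by
  apply Subgroup.list_prod_mem
  intro g hg
  simp only [List.mem_map] at hg
  obtain ⟨l, -, rfl⟩ := hg
  exact hf l

lemma pc_x_prod (x y : G) (hca : ∀ z ∈ Zsub x y, ∀ h ∈ Hsub x y, z * h = h * z)
    (n : ℕ) (f : ℕ → G) (hf : ∀ l, f l ∈ Zsub x y) :
    ((List.range n).map (fun l => pc (f l) x)).prod
      = pc (((List.range n).map f).prod) x := by
  induction n with
  | zero => simp [pc_one_left]
  | succ n ih =>
    rw [List.range_succ, List.map_append, List.map_append, List.prod_append, List.prod_append]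
    simp only [List.map_cons, List.map_nil, List.prod_cons, List.prod_nil, mul_one]
    rw [ih, ← pc_x_z_mul x y hca (list_prod_map_mem n f hf) (hf n)]

lemma prod_map_mul (x y : G) (hca : ∀ z ∈ Zsub x y, ∀ h ∈ Hsub x y, z * h = h * z)
    (n : ℕ) (f g : ℕ → G) (hf : ∀ l, f l ∈ Zsub x y) (hg : ∀ l, g l ∈ Zsub x y) :
    ((List.range n).map (fun l => f l * g l)).prod
      = ((List.range n).map f).prod * ((List.range n).map g).prod := by
  induction n with
  | zero => simp
  | succ n ih =>
    rw [List.range_succ, List.map_append, List.map_append, List.map_append,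
      List.prod_append, List.prod_append, List.prod_append]
    simp only [List.map_cons, List.map_nil, List.prod_cons, List.prod_nil, mul_one]
    rw [ih]
    have hswap : ((List.range n).map g).prod * f n = f n * ((List.range n).map g).prod :=
      zcomm x y hca (list_prod_map_mem n g hg) (hf n)
    calc ((List.range n).map f).prod * ((List.range n).map g).prod * (f n * g n)
        = ((List.range n).map f).prod * (((List.range n).map g).prod * f n) * g n := by group
      _ = ((List.range n).map f).prod * (f n * ((List.range n).map g).prod) * g n := by
          rw [hswap]
      _ = ((List.range n).map f).prod * f n * (((List.range n).map g).prod * g n) := by group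

lemma prod_map_one (n : ℕ) : ((List.range n).map (fun _ => (1 : G))).prod = 1 := by
  simp

/-! ### The correction term `E` -/

def EE (x : G) (r : ℕ) (h₁ h₂ : G) : G :=
  ((List.range r).map
    (fun l => itc x (pc (itc x h₁ (l + 1)) (itc x h₂ l)) (r - 1 - l))).prod

section EEfacts

variable (x y : G) (hca : ∀ z ∈ Zsub x y, ∀ h ∈ Hsub x y, z * h = h * z)

include hca

lemma EE_factor_mem {h₁ h₂ : G} (hh₁ : h₁ ∈ Hsub x y) (hh₂ : h₂ ∈ Hsub x y)
    (l m : ℕ) : itc x (pc (itc x h₁ (l + 1)) (itc x h₂ l)) m ∈ Zsub x y :=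
  itc_mem_Z x y hca
    (pc_mem_Z x y hca _ (itc_mem_H x y hh₁ (l + 1)) _ (itc_mem_H x y hh₂ l)) m

lemma EE_mem_Z {h₁ h₂ : G} (hh₁ : h₁ ∈ Hsub x y) (hh₂ : h₂ ∈ Hsub x y) (r : ℕ) :
    EE x r h₁ h₂ ∈ Zsub x y :=
  list_prod_map_mem r _ (fun l => EE_factor_mem x y hca hh₁ hh₂ l (r - 1 - l))

lemma EE_succ {h₁ h₂ : G} (hh₁ : h₁ ∈ Hsub x y) (hh₂ : h₂ ∈ Hsub x y) (r : ℕ) :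
    EE x (r + 1) h₁ h₂
      = pc (EE x r h₁ h₂) x * pc (itc x h₁ (r + 1)) (itc x h₂ r) := by
  unfold EE
  rw [List.range_succ, List.map_append, List.prod_append]
  simp only [List.map_cons, List.map_nil, List.prod_cons, List.prod_nil, mul_one]
  have hlast : r + 1 - 1 - r = 0 := by omega
  rw [hlast, itc_zero]
  congr 1
  have hcongr : ((List.range r).map
        (fun l => itc x (pc (itc x h₁ (l + 1)) (itc x h₂ l)) (r + 1 - 1 - l))).prod
      = ((List.range r).map
        (fun l => pc (itc x (pc (itc x h₁ (l + 1)) (itc x h₂ l)) (r - 1 - l)) x)).prod := by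
    congr 1
    apply List.map_congr_left
    intro l hl
    rw [List.mem_range] at hl
    rw [show r + 1 - 1 - l = (r - 1 - l) + 1 by omega, itc_succ]
  rw [hcongr, pc_x_prod x y hca r _ (fun l => EE_factor_mem x y hca hh₁ hh₂ l (r - 1 - l))]

lemma itc_mul (r : ℕ) : ∀ {h₁ h₂ : G}, h₁ ∈ Hsub x y → h₂ ∈ Hsub x y →
    itc x (h₁ * h₂) r = itc x h₁ r * itc x h₂ r * EE x r h₁ h₂ := by
  induction r with
  | zero =>
    intro h₁ h₂ _ _
    simp [EE, itc_zero]
  | succ r ih =>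
    intro h₁ h₂ hh₁ hh₂
    have hA : itc x h₁ r ∈ Hsub x y := itc_mem_H x y hh₁ r
    have hB : itc x h₂ r ∈ Hsub x y := itc_mem_H x y hh₂ r
    have hAB : itc x h₁ r * itc x h₂ r ∈ Hsub x y := mul_mem hA hB
    have he : EE x r h₁ h₂ ∈ Zsub x y := EE_mem_Z x y hca hh₁ hh₂ r
    rw [itc_succ, ih hh₁ hh₂]
    have step1 : pc (itc x h₁ r * itc x h₂ r * EE x r h₁ h₂) x
        = ((EE x r h₁ h₂)⁻¹ * pc (itc x h₁ r * itc x h₂ r) x * EE x r h₁ h₂)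
          * pc (EE x r h₁ h₂) x := by
      simp only [pc]; group
    rw [step1, conjH x y hca he (pc_x_mem_H x y hAB)]
    have step2 : pc (itc x h₁ r * itc x h₂ r) x
        = pc (itc x h₁ r) x * (pc (pc (itc x h₁ r) x) (itc x h₂ r)
            * pc (itc x h₂ r) x) := by
      simp only [pc]; group
    rw [step2]
    have hz1 : pc (pc (itc x h₁ r) x) (itc x h₂ r) ∈ Zsub x y :=
      pc_mem_Z x y hca _ (pc_x_mem_H x y hA) _ hB
    rw [hca _ hz1 _ (pc_x_mem_H x y hB)]
    rw [EE_succ x y hca hh₁ hh₂ r]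
    have hz2' : pc (EE x r h₁ h₂) x ∈ Zsub x y := pc_x_mem_Z x y hca he
    have hz3 : pc (itc x h₁ (r + 1)) (itc x h₂ r) ∈ Zsub x y :=
      pc_mem_Z x y hca _ (itc_mem_H x y hh₁ (r + 1)) _ hB
    have hswap : pc (EE x r h₁ h₂) x * pc (itc x h₁ (r + 1)) (itc x h₂ r)
        = pc (itc x h₁ (r + 1)) (itc x h₂ r) * pc (EE x r h₁ h₂) x :=
      zcomm x y hca hz2' hz3
    rw [hswap]
    rw [show itc x h₁ (r + 1) = pc (itc x h₁ r) x from rfl,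
      show itc x h₂ (r + 1) = pc (itc x h₂ r) x from rfl]
    group

end EEfacts

section EEbilin

variable (x y : G) (hca : ∀ z ∈ Zsub x y, ∀ h ∈ Hsub x y, z * h = h * z)

include hca

lemma EE_mul_left (r : ℕ) {h₁ h₁' h₂ : G} (hh₁ : h₁ ∈ Hsub x y)
    (hh₁' : h₁' ∈ Hsub x y) (hh₂ : h₂ ∈ Hsub x y) :
    EE x r (h₁ * h₁') h₂ = EE x r h₁ h₂ * EE x r h₁' h₂ := by
  have key : ∀ l m : ℕ, itc x (pc (itc x (h₁ * h₁') (l + 1)) (itc x h₂ l)) m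
      = itc x (pc (itc x h₁ (l + 1)) (itc x h₂ l)) m
        * itc x (pc (itc x h₁' (l + 1)) (itc x h₂ l)) m := by
    intro l m
    rw [itc_mul x y hca (l + 1) hh₁ hh₁',
      pc_zabsorb_left x y hca (mul_mem (itc_mem_H x y hh₁ (l + 1)) (itc_mem_H x y hh₁' (l + 1)))
        (EE_mem_Z x y hca hh₁ hh₁' (l + 1)) (itc_mem_H x y hh₂ l),
      pc_mul_left_H x y hca (itc_mem_H x y hh₁ (l + 1)) (itc_mem_H x y hh₁' (l + 1))
        (itc_mem_H x y hh₂ l),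
      itc_z_mul x y hca (pc_mem_Z x y hca _ (itc_mem_H x y hh₁ (l + 1)) _ (itc_mem_H x y hh₂ l))
        (pc_mem_Z x y hca _ (itc_mem_H x y hh₁' (l + 1)) _ (itc_mem_H x y hh₂ l)) m]
  unfold EE
  simp only [key]
  exact prod_map_mul x y hca r _ _
    (fun l => EE_factor_mem x y hca hh₁ hh₂ l (r - 1 - l))
    (fun l => EE_factor_mem x y hca hh₁' hh₂ l (r - 1 - l))

lemma EE_mul_right (r : ℕ) {h₁ h₂ h₂' : G} (hh₁ : h₁ ∈ Hsub x y)
    (hh₂ : h₂ ∈ Hsub x y) (hh₂' : h₂' ∈ Hsub x y) :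
    EE x r h₁ (h₂ * h₂') = EE x r h₁ h₂ * EE x r h₁ h₂' := by
  have key : ∀ l m : ℕ, itc x (pc (itc x h₁ (l + 1)) (itc x (h₂ * h₂') l)) m
      = itc x (pc (itc x h₁ (l + 1)) (itc x h₂ l)) m
        * itc x (pc (itc x h₁ (l + 1)) (itc x h₂' l)) m := by
    intro l m
    rw [itc_mul x y hca l hh₂ hh₂',
      pc_zabsorb_right x y hca (itc_mem_H x y hh₁ (l + 1))
        (mul_mem (itc_mem_H x y hh₂ l) (itc_mem_H x y hh₂' l))
        (EE_mem_Z x y hca hh₂ hh₂' l),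
      pc_mul_right_H x y hca (itc_mem_H x y hh₁ (l + 1)) (itc_mem_H x y hh₂ l)
        (itc_mem_H x y hh₂' l),
      itc_z_mul x y hca (pc_mem_Z x y hca _ (itc_mem_H x y hh₁ (l + 1)) _ (itc_mem_H x y hh₂ l))
        (pc_mem_Z x y hca _ (itc_mem_H x y hh₁ (l + 1)) _ (itc_mem_H x y hh₂' l)) m]
  unfold EE
  simp only [key]
  exact prod_map_mul x y hca r _ _
    (fun l => EE_factor_mem x y hca hh₁ hh₂ l (r - 1 - l))
    (fun l => EE_factor_mem x y hca hh₁ hh₂' l (r - 1 - l))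

lemma EE_inv_left (hz2 : ∀ z ∈ Zsub x y, z ^ 2 = 1) (r : ℕ) {h₁ h₂ : G}
    (hh₁ : h₁ ∈ Hsub x y) (hh₂ : h₂ ∈ Hsub x y) :
    EE x r h₁⁻¹ h₂ = EE x r h₁ h₂ := by
  have key : ∀ l m : ℕ, itc x (pc (itc x h₁⁻¹ (l + 1)) (itc x h₂ l)) m
      = itc x (pc (itc x h₁ (l + 1)) (itc x h₂ l)) m := by
    intro l m
    have hx1 : itc x h₁ (l + 1) * itc x h₁⁻¹ (l + 1) * EE x (l + 1) h₁ h₁⁻¹ = 1 := by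
      rw [← itc_mul x y hca (l + 1) hh₁ (inv_mem hh₁), mul_inv_cancel, itc_one]
    have h2 : itc x h₁⁻¹ (l + 1)
        = (itc x h₁ (l + 1))⁻¹ * (EE x (l + 1) h₁ h₁⁻¹)⁻¹ := by
      calc itc x h₁⁻¹ (l + 1)
          = (itc x h₁ (l + 1))⁻¹ * (itc x h₁ (l + 1) * itc x h₁⁻¹ (l + 1)
              * EE x (l + 1) h₁ h₁⁻¹) * (EE x (l + 1) h₁ h₁⁻¹)⁻¹ := by group
        _ = (itc x h₁ (l + 1))⁻¹ * 1 * (EE x (l + 1) h₁ h₁⁻¹)⁻¹ := by rw [hx1]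
        _ = (itc x h₁ (l + 1))⁻¹ * (EE x (l + 1) h₁ h₁⁻¹)⁻¹ := by group
    rw [h2, pc_zabsorb_left x y hca (inv_mem (itc_mem_H x y hh₁ (l + 1)))
        (inv_mem (EE_mem_Z x y hca hh₁ (inv_mem hh₁) (l + 1))) (itc_mem_H x y hh₂ l),
      pc_inv_left_H x y hca (itc_mem_H x y hh₁ (l + 1)) (itc_mem_H x y hh₂ l),
      itc_z_inv x y hca (pc_mem_Z x y hca _ (itc_mem_H x y hh₁ (l + 1)) _ (itc_mem_H x y hh₂ l)) m,
      z_invol x y hz2 (EE_factor_mem x y hca hh₁ hh₂ l m)]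
  unfold EE
  simp only [key]

lemma EE_inv_right (hz2 : ∀ z ∈ Zsub x y, z ^ 2 = 1) (r : ℕ) {h₁ h₂ : G}
    (hh₁ : h₁ ∈ Hsub x y) (hh₂ : h₂ ∈ Hsub x y) :
    EE x r h₁ h₂⁻¹ = EE x r h₁ h₂ := by
  have key : ∀ l m : ℕ, itc x (pc (itc x h₁ (l + 1)) (itc x h₂⁻¹ l)) m
      = itc x (pc (itc x h₁ (l + 1)) (itc x h₂ l)) m := by
    intro l m
    have hx1 : itc x h₂ l * itc x h₂⁻¹ l * EE x l h₂ h₂⁻¹ = 1 := by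
      rw [← itc_mul x y hca l hh₂ (inv_mem hh₂), mul_inv_cancel, itc_one]
    have h2 : itc x h₂⁻¹ l = (itc x h₂ l)⁻¹ * (EE x l h₂ h₂⁻¹)⁻¹ := by
      calc itc x h₂⁻¹ l
          = (itc x h₂ l)⁻¹ * (itc x h₂ l * itc x h₂⁻¹ l * EE x l h₂ h₂⁻¹)
              * (EE x l h₂ h₂⁻¹)⁻¹ := by group
        _ = (itc x h₂ l)⁻¹ * 1 * (EE x l h₂ h₂⁻¹)⁻¹ := by rw [hx1]
        _ = (itc x h₂ l)⁻¹ * (EE x l h₂ h₂⁻¹)⁻¹ := by group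
    rw [h2, pc_zabsorb_right x y hca (itc_mem_H x y hh₁ (l + 1))
        (inv_mem (itc_mem_H x y hh₂ l)) (inv_mem (EE_mem_Z x y hca hh₂ (inv_mem hh₂) l)),
      pc_inv_right_H x y hca (itc_mem_H x y hh₁ (l + 1)) (itc_mem_H x y hh₂ l),
      itc_z_inv x y hca (pc_mem_Z x y hca _ (itc_mem_H x y hh₁ (l + 1)) _ (itc_mem_H x y hh₂ l)) m,
      z_invol x y hz2 (EE_factor_mem x y hca hh₁ hh₂ l m)]
  unfold EE
  simp only [key]

end EEbilin

lemma EE_one_left (x : G) (r : ℕ) (h₂ : G) : EE x r 1 h₂ = 1 := by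
  unfold EE
  have : ∀ l : ℕ, itc x (pc (itc x (1 : G) (l + 1)) (itc x h₂ l)) (r - 1 - l) = 1 := by
    intro l
    rw [itc_one, pc_one_left, itc_one]
  simp only [this]
  exact prod_map_one r

lemma EE_one_right (x : G) (r : ℕ) (h₁ : G) : EE x r h₁ 1 = 1 := by
  unfold EE
  have : ∀ l : ℕ, itc x (pc (itc x h₁ (l + 1)) (itc x (1 : G) l)) (r - 1 - l) = 1 := by
    intro l
    rw [itc_one, pc_one_right, itc_one]
  simp only [this]
  exact prod_map_one r

lemma EE_cc (x y : G) (k i j : ℕ) (hi : 1 ≤ i) (hj : 1 ≤ j) :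
    EE x (2 ^ k - 1) (cc x y i) (cc x y j) = ww x y i j k := by
  unfold EE ww
  congr 1
  apply List.map_congr_left
  intro l hl
  rw [itc_cc x y i (l + 1) hi, itc_cc x y j l hj,
    show i + (l + 1) = i + l + 1 by omega,
    show 2 ^ k - 1 - 1 - l = 2 ^ k - 2 - l by omega]
  rfl

/-! ### Vanishing of `E` at `r = 2^k - 1` -/

lemma EE_eq_one (x y : G) (hca : ∀ z ∈ Zsub x y, ∀ h ∈ Hsub x y, z * h = h * z)
    (hz2 : ∀ z ∈ Zsub x y, z ^ 2 = 1) (k : ℕ)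
    (hw : ∀ i j : ℕ, 1 ≤ i → 1 ≤ j → ww x y i j k = 1) :
    ∀ h₁ ∈ Hsub x y, ∀ h₂ ∈ Hsub x y, EE x (2 ^ k - 1) h₁ h₂ = 1 := by
  intro h₁ hh₁
  refine Subgroup.closure_induction
    (p := fun g _ => ∀ h₂ ∈ Hsub x y, EE x (2 ^ k - 1) g h₂ = 1) ?_ ?_ ?_ ?_ hh₁
  · rintro g ⟨i, hi, rfl⟩ h₂ hh₂
    refine Subgroup.closure_induction
      (p := fun b _ => EE x (2 ^ k - 1) (cc x y i) b = 1) ?_ ?_ ?_ ?_ hh₂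
    · rintro b ⟨j, hj, rfl⟩
      rw [EE_cc x y k i j hi hj]
      exact hw i j hi hj
    · exact EE_one_right x (2 ^ k - 1) (cc x y i)
    · intro b c hbH hcH hb hc
      rw [EE_mul_right x y hca (2 ^ k - 1) (cc_mem x y i) hbH hcH, hb, hc, one_mul]
    · intro b hbH hb
      rw [EE_inv_right x y hca hz2 (2 ^ k - 1) (cc_mem x y i) hbH, hb]
  · intro h₂ _
    exact EE_one_left x (2 ^ k - 1) h₂
  · intro a b haH hbH ha hb h₂ hh₂
    rw [EE_mul_left x y hca (2 ^ k - 1) haH hbH hh₂, ha h₂ hh₂, hb h₂ hh₂, one_mul]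
  · intro a haH ha h₂ hh₂
    rw [EE_inv_left x y hca hz2 (2 ^ k - 1) haH hh₂, ha h₂ hh₂]

/-- Core statement: in any group where all `ww x y i j k` vanish, the iterated
commutator of length `2^k - 1` is multiplicative on `H`. -/
lemma core_mul (x y : G) (hca : ∀ z ∈ Zsub x y, ∀ h ∈ Hsub x y, z * h = h * z)
    (hz2 : ∀ z ∈ Zsub x y, z ^ 2 = 1) (k : ℕ)
    (hw : ∀ i j : ℕ, 1 ≤ i → 1 ≤ j → ww x y i j k = 1)
    {h₁ h₂ : G} (hh₁ : h₁ ∈ Hsub x y) (hh₂ : h₂ ∈ Hsub x y) :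
    itc x (h₁ * h₂) (2 ^ k - 1) = itc x h₁ (2 ^ k - 1) * itc x h₂ (2 ^ k - 1) := by
  rw [itc_mul x y hca (2 ^ k - 1) hh₁ hh₂,
    EE_eq_one x y hca hz2 k hw h₁ hh₁ h₂ hh₂, mul_one]

theorem lemma_Lk_ii (x y : G)
    (hca : ∀ z ∈ Zsub x y, ∀ h ∈ Hsub x y, z * h = h * z)
    (hz2 : ∀ z ∈ Zsub x y, z ^ 2 = 1)
    (k : ℕ) (hk : 1 ≤ k) (h₁ h₂ : G) (hh₁ : h₁ ∈ Hsub x y) (hh₂ : h₂ ∈ Hsub x y) :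
    (itc x h₁ (2 ^ k - 1) * itc x h₂ (2 ^ k - 1))⁻¹ * itc x (h₁ * h₂) (2 ^ k - 1) ∈
      Lsub x y k := by
  haveI hN : (Lsub x y k).Normal := Subgroup.normalClosure_normal
  set f : G →* G ⧸ Lsub x y k := QuotientGroup.mk' (Lsub x y k) with hf
  have fpc : ∀ a b : G, f (pc a b) = pc (f a) (f b) := by
    intro a b; simp [pc, map_mul, map_inv]
  have fitc : ∀ (a : G) (l : ℕ), f (itc x a l) = itc (f x) (f a) l := by
    intro a l
    induction l with
    | zero => rfl
    | succ n ih => rw [itc_succ, itc_succ, fpc, ih]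
  have fcc : ∀ i, f (cc x y i) = cc (f x) (f y) i := fun i => fitc y (i - 1)
  have fzz : ∀ m n, f (zz x y m n) = zz (f x) (f y) m n := by
    intro m n
    show f (pc (cc x y m) (cc x y n)) = pc (cc (f x) (f y) m) (cc (f x) (f y) n)
    rw [fpc, fcc, fcc]
  have fww : ∀ i j, f (ww x y i j k) = ww (f x) (f y) i j k := by
    intro i j
    unfold ww
    rw [map_list_prod, List.map_map]
    congr 1
    apply List.map_congr_left
    intro t _
    simp only [Function.comp_apply]
    rw [fitc, fzz]
  have hHmap : (Hsub x y).map f = Hsub (f x) (f y) := by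
    unfold Hsub
    rw [MonoidHom.map_closure]
    congr 1
    ext g
    constructor
    · rintro ⟨g₀, ⟨i, hi, rfl⟩, rfl⟩
      exact ⟨i, hi, fcc i⟩
    · rintro ⟨i, hi, rfl⟩
      exact ⟨cc x y i, ⟨i, hi, rfl⟩, fcc i⟩
  have hZmap : (Zsub x y).map f = Zsub (f x) (f y) := by
    unfold Zsub
    rw [MonoidHom.map_closure]
    congr 1
    ext g
    constructor
    · rintro ⟨g₀, (⟨l, hl, rfl⟩ | ⟨m, n, hm, hn, rfl⟩), rfl⟩
      · exact Or.inl ⟨l, hl, by rw [map_pow, fcc]⟩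
      · exact Or.inr ⟨m, n, hm, hn, fzz m n⟩
    · rintro (⟨l, hl, rfl⟩ | ⟨m, n, hm, hn, rfl⟩)
      · exact ⟨cc x y l ^ 2, Or.inl ⟨l, hl, rfl⟩, by rw [map_pow, fcc]⟩
      · exact ⟨zz x y m n, Or.inr ⟨m, n, hm, hn, rfl⟩, fzz m n⟩
  have hca' : ∀ z ∈ Zsub (f x) (f y), ∀ h ∈ Hsub (f x) (f y), z * h = h * z := by
    intro z hz h hh
    rw [← hZmap] at hz
    rw [← hHmap] at hh
    obtain ⟨z₀, hz₀, rfl⟩ := hz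
    obtain ⟨h₀, hh₀, rfl⟩ := hh
    rw [← map_mul, ← map_mul, hca z₀ hz₀ h₀ hh₀]
  have hz2' : ∀ z ∈ Zsub (f x) (f y), z ^ 2 = 1 := by
    intro z hz
    rw [← hZmap] at hz
    obtain ⟨z₀, hz₀, rfl⟩ := hz
    rw [← map_pow, hz2 z₀ hz₀, map_one]
  have hw' : ∀ i j : ℕ, 1 ≤ i → 1 ≤ j → ww (f x) (f y) i j k = 1 := by
    intro i j hi hj
    rw [← fww]
    have hmem : ww x y i j k ∈ Lsub x y k :=
      Subgroup.subset_normalClosure (Or.inl ⟨i, j, hi, hj, rfl⟩)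
    exact (QuotientGroup.eq_one_iff _).mpr hmem
  have hfh₁ : f h₁ ∈ Hsub (f x) (f y) := hHmap ▸ Subgroup.mem_map_of_mem f hh₁
  have hfh₂ : f h₂ ∈ Hsub (f x) (f y) := hHmap ▸ Subgroup.mem_map_of_mem f hh₂
  have hcore := core_mul (f x) (f y) hca' hz2' k hw' hfh₁ hfh₂
  have hone : f ((itc x h₁ (2 ^ k - 1) * itc x h₂ (2 ^ k - 1))⁻¹
      * itc x (h₁ * h₂) (2 ^ k - 1)) = 1 := by
    rw [map_mul, map_inv, map_mul, fitc, fitc, fitc, map_mul, hcore]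
    group
  exact (QuotientGroup.eq_one_iff _).mp hone

end Paper
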